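/- Let N ≥ 1, λ ∈ ℝ with λ ≠ 0, and let a_j, c_j ∈ ℂ (1 ≤ j ≤ N) satisfy the strip condition −3δ/2 < Im a_j < −δ/2 for all j and the constraints c_j·(λ − i·Σ_{k=1}^N conj(c_k)·α(a_j − conj(a_k) + iδ)) + 1 = 0 for all j. Then Im(Σ_{j=1}^N c_j) = 0. -/

import Mathlib

open MeasureTheory Filter Finset ComplexConjugate

noncomputable section

/-- `α(z) = (π/(2δ)) coth(πz/(2δ))`. -/
def cmAlpha (δ : ℝ) (z : ℂ) : ℂ :=
  ((Real.pi / (2 * δ) : ℝ) : ℂ) *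
    (Complex.cosh ((Real.pi : ℂ) * z / (2 * (δ : ℂ))) /
     Complex.sinh ((Real.pi : ℂ) * z / (2 * (δ : ℂ))))

/-- `V(z) = (π/(2δ))² / sinh(πz/(2δ))²`. -/
def cmV (δ : ℝ) (z : ℂ) : ℂ :=
  ((Real.pi / (2 * δ) : ℝ) : ℂ) ^ 2 / Complex.sinh ((Real.pi : ℂ) * z / (2 * (δ : ℂ))) ^ 2

/-- `V'(z) = -2 (π/(2δ))³ cosh(πz/(2δ)) / sinh(πz/(2δ))³`. -/
def cmV' (δ : ℝ) (z : ℂ) : ℂ :=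
  -2 * ((Real.pi / (2 * δ) : ℝ) : ℂ) ^ 3 *
    Complex.cosh ((Real.pi : ℂ) * z / (2 * (δ : ℂ))) /
    Complex.sinh ((Real.pi : ℂ) * z / (2 * (δ : ℂ))) ^ 3

/-- real hyperbolic cotangent -/
def rcoth (y : ℝ) : ℝ := Real.cosh y / Real.sinh y

/-- `(T g)(x) = L`: the principal-value limit defining the operator `T` exists and equals `L`. -/
def HasPV (δ : ℝ) (g : ℝ → ℂ) (x : ℝ) (L : ℂ) : Prop :=
  Tendsto (fun ε : ℝ =>
      (1 / (2 * (δ : ℂ))) *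
        ∫ x' in {x' : ℝ | ε ≤ |x' - x|},
          ((rcoth (Real.pi * (x' - x) / (2 * δ)) : ℝ) : ℂ) * g x')
    (nhdsWithin 0 (Set.Ioi 0)) (nhds L)

/-- kernel of the operator `T̃`. -/
def TtKer (δ : ℝ) (x x' : ℝ) : ℝ := Real.tanh (Real.pi * (x' - x) / (2 * δ))

/-- the operator `T̃`. -/
def Ttilde (δ : ℝ) (g : ℝ → ℂ) (x : ℝ) : ℂ :=
  (1 / (2 * (δ : ℂ))) * ∫ x', ((TtKer δ x x' : ℝ) : ℂ) * g x'

/-- `x' ↦ ∂_{x'} |w(x',t)|²`. -/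
def sqAbsDeriv (w : ℝ → ℝ → ℂ) (t x' : ℝ) : ℝ :=
  deriv (fun y => ‖w y t‖ ^ 2) x'

/-- The intermediate mixed Manakov (IMM) system holds for the pair `(u,v)` at the point `(x,t)`,
including existence of the relevant principal-value limits and integrals. -/
def IMMat (δ : ℝ) (u v : ℝ → ℝ → ℂ) (x t : ℝ) : Prop :=
  ∃ Tu Tv : ℂ,
    HasPV δ (fun x' => ((sqAbsDeriv u t x' : ℝ) : ℂ)) x Tu ∧
    HasPV δ (fun x' => ((sqAbsDeriv v t x' : ℝ) : ℂ)) x Tv ∧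
    Integrable (fun x' => ((TtKer δ x x' : ℝ) : ℂ) * ((sqAbsDeriv u t x' : ℝ) : ℂ)) ∧
    Integrable (fun x' => ((TtKer δ x x' : ℝ) : ℂ) * ((sqAbsDeriv v t x' : ℝ) : ℂ)) ∧
    Complex.I * deriv (fun s => u x s) t =
      deriv (fun y => deriv (fun z => u z t) y) x
        + u x t * (Complex.I * ((sqAbsDeriv u t x : ℝ) : ℂ) + Tu)
        - u x t * Ttilde δ (fun x' => ((sqAbsDeriv v t x' : ℝ) : ℂ)) x ∧
    Complex.I * deriv (fun s => v x s) t =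
      deriv (fun y => deriv (fun z => v z t) y) x
        + v x t * (Complex.I * ((sqAbsDeriv v t x : ℝ) : ℂ) - Tv)
        + v x t * Ttilde δ (fun x' => ((sqAbsDeriv u t x' : ℝ) : ℂ)) x

/-- the time interval `[0, τ)` for `τ ∈ (0, ∞]`. -/
def timeDom (τ : ENNReal) : Set ℝ := {t : ℝ | 0 ≤ t ∧ ENNReal.ofReal t < τ}

lemma cmAlpha_conj (δ : ℝ) (z : ℂ) : conj (cmAlpha δ z) = cmAlpha δ (conj z) := by
  simp only [cmAlpha, map_mul, map_div₀, Complex.conj_ofReal, ← Complex.cosh_conj,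
    ← Complex.sinh_conj, map_ofNat]

lemma cmAlpha_neg (δ : ℝ) (z : ℂ) : cmAlpha δ (-z) = -cmAlpha δ z := by
  simp [cmAlpha, mul_neg, neg_div, Complex.cosh_neg, Complex.sinh_neg, div_neg, mul_comm]

/-- the constraints force the sum of the residues to be real. -/
theorem imm_sum_c_real
    (δ : ℝ) (hδ : 0 < δ) (N : ℕ) (hN : 1 ≤ N)
    (lam : ℝ) (hlam : lam ≠ 0) (a c : Fin N → ℂ)
    (hstrip : ∀ j, -(3 * δ) / 2 < (a j).im ∧ (a j).im < -δ / 2)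
    (hC : ∀ j, c j * ((lam : ℂ) - Complex.I * ∑ k, conj (c k) *
      cmAlpha δ (a j - conj (a k) + Complex.I * (δ : ℂ))) + 1 = 0) :
    (∑ j, c j).im = 0 := by
  set z : Fin N → Fin N → ℂ := fun j k => a j - conj (a k) + Complex.I * (δ : ℂ) with hz
  set Q : ℂ := ∑ j, ∑ k, c j * conj (c k) * cmAlpha δ (z j k) with hQdef
  have key : ∀ j k, conj (cmAlpha δ (z j k)) = - cmAlpha δ (z k j) := by
    intro j k
    rw [cmAlpha_conj]
    have hzz : conj (z j k) = -(z k j) := by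
      simp only [hz, map_add, map_sub, map_mul, Complex.conj_conj, Complex.conj_ofReal,
        Complex.conj_I]
      ring
    rw [hzz, cmAlpha_neg]
  have h1 : (lam : ℂ) * (∑ j, c j) - Complex.I * Q = -(N : ℂ) := by
    have h2 : ∑ j : Fin N, (c j * ((lam : ℂ) -
        Complex.I * ∑ k, conj (c k) * cmAlpha δ (z j k))) = -(N : ℂ) := by
      rw [Finset.sum_congr rfl (fun j _ => show _ = (-1 : ℂ) by linear_combination hC j)]
      simp
    calc (lam : ℂ) * (∑ j, c j) - Complex.I * Q
        = ∑ j, ((lam : ℂ) * c j -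
            Complex.I * ∑ k, c j * conj (c k) * cmAlpha δ (z j k)) := by
          rw [hQdef, Finset.mul_sum, Finset.mul_sum, ← Finset.sum_sub_distrib]
      _ = ∑ j, (c j * ((lam : ℂ) - Complex.I * ∑ k, conj (c k) * cmAlpha δ (z j k))) := by
          refine Finset.sum_congr rfl fun j _ => ?_
          have hs : ∑ k, c j * conj (c k) * cmAlpha δ (z j k)
              = c j * ∑ k, conj (c k) * cmAlpha δ (z j k) := by
            rw [Finset.mul_sum]
            exact Finset.sum_congr rfl fun k _ => (mul_assoc _ _ _)
          rw [hs]; ring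
      _ = -(N : ℂ) := h2
  have hQ : conj Q = -Q := by
    calc conj Q = ∑ j, ∑ k, conj (c j) * c k * conj (cmAlpha δ (z j k)) := by
          simp [hQdef, map_sum, map_mul]
      _ = ∑ j, ∑ k, -(c k * conj (c j) * cmAlpha δ (z k j)) := by
          refine Finset.sum_congr rfl fun j _ => Finset.sum_congr rfl fun k _ => ?_
          rw [key j k]; ring
      _ = -Q := by
          rw [Finset.sum_comm]
          simp only [Finset.sum_neg_distrib]
          rw [hQdef]
  have hQre : Q.re = 0 := by
    have := congrArg Complex.re hQ
    simp only [Complex.conj_re, Complex.neg_re] at this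
    linarith
  have him := congrArg Complex.im h1
  simp only [Complex.sub_im, Complex.mul_im, Complex.ofReal_im, Complex.ofReal_re,
    Complex.I_im, Complex.I_re, Complex.neg_im, Complex.natCast_im, zero_mul, one_mul,
    mul_zero, add_zero, zero_add, neg_zero, hQre] at him
  have : lam * (∑ j, c j).im = 0 := by linarith
  exact (mul_eq_zero.mp this).resolve_left hlam
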